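/- Let n ≥ 2, let Σ be a symmetric positive definite real n×n matrix, let a ∈ ℝⁿ be nonzero, and let W be a real n×(n−1) matrix with rank W = n − 1 and Wᵀ·a = 0. Then the linear map x ↦ (aᵀ·Σ·x, Wᵀ·x) from ℝⁿ to ℝ × ℝ^{n−1} is injective. -/

import Mathlib

open Matrix

/-- Rank condition of Proposition 1 for `k = 1`, `s = n − 1`: with `Σ` positive
definite, `a ≠ 0`, `W` of full column rank `n − 1` and `Wᵀ a = 0`, the map
`x ↦ (aᵀ Σ x, Wᵀ x)` is injective. -/
theorem stmt_19 (n : ℕ) (hn : 2 ≤ n)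
    (Sig : Matrix (Fin n) (Fin n) ℝ) (hSig : Sig.PosDef)
    (a : Fin n → ℝ) (ha : a ≠ 0)
    (W : Matrix (Fin n) (Fin (n - 1)) ℝ) (hW : W.rank = n - 1)
    (hWa : Wᵀ.mulVec a = 0) :
    Function.Injective
      (fun x : Fin n → ℝ => (a ⬝ᵥ Sig.mulVec x, Wᵀ.mulVec x)) := by
  -- kernel of Wᵀ has dimension 1
  have hrankT : Wᵀ.rank = n - 1 := by rw [Matrix.rank_transpose]; exact hW
  set f := Wᵀ.mulVecLin with hf
  have hker : Module.finrank ℝ (LinearMap.ker f) = 1 := by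
    have h1 := LinearMap.finrank_range_add_finrank_ker f
    have h2 : Module.finrank ℝ (LinearMap.range f) = n - 1 := hrankT
    have h3 : Module.finrank ℝ (Fin n → ℝ) = n := Module.finrank_fin_fun ℝ
    omega
  have haker : a ∈ LinearMap.ker f := by
    rw [LinearMap.mem_ker, hf, Matrix.mulVecLin_apply]; exact hWa
  have hspan : LinearMap.ker f = Submodule.span ℝ {a} := by
    symm
    apply Submodule.eq_of_le_of_finrank_eq
    · exact Submodule.span_le.2 (by simpa using haker)
    · rw [hker, finrank_span_singleton ha]
  have haa : 0 < a ⬝ᵥ Sig.mulVec a := by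
    have := hSig.dotProduct_mulVec_pos ha
    simpa using this
  intro x y hxy
  have h1 : a ⬝ᵥ Sig.mulVec x = a ⬝ᵥ Sig.mulVec y := congrArg Prod.fst hxy
  have h2 : Wᵀ.mulVec x = Wᵀ.mulVec y := congrArg Prod.snd hxy
  set z := x - y with hz
  have hz1 : a ⬝ᵥ Sig.mulVec z = 0 := by
    simp only [hz, Matrix.mulVec_sub, dotProduct_sub]
    rw [h1]; ring
  have hz2 : z ∈ LinearMap.ker f := by
    rw [LinearMap.mem_ker, hf, Matrix.mulVecLin_apply, hz, Matrix.mulVec_sub, h2, sub_self]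
  rw [hspan, Submodule.mem_span_singleton] at hz2
  obtain ⟨c, hc⟩ := hz2
  have : c * (a ⬝ᵥ Sig.mulVec a) = 0 := by
    have : a ⬝ᵥ Sig.mulVec (c • a) = 0 := by rw [hc]; exact hz1
    simpa [Matrix.mulVec_smul, dotProduct_smul, smul_eq_mul] using this
  have hc0 : c = 0 := by
    rcases mul_eq_zero.mp this with h | h
    · exact h
    · exact absurd h (ne_of_gt haa)
  have : z = 0 := by rw [← hc, hc0, zero_smul]
  exact sub_eq_zero.mp (by simpa [hz] using this)
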